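/- (Homological equation, finite dimension.) Let H_0 = Σ_{j=1}^n ω_j ξ_j η_j and let Q be a homogeneous polynomial of degree k in (ξ, η) with coefficients a_{jl} satisfying the reality condition ā_{jl} = a_{lj}. Then there exist homogeneous polynomials χ and Z of degree k, also satisfying the reality condition, such that {H_0, χ} + Q = Z and {Z, H_0} = 0. -/

import Mathlib

/-- The small divisor `Ω` of a degree-`k` monomial: each factor is a pair
`(i, b)` where `i` is a mode and `b = true` for a `ξ`-factor (contributing `+ω_i`),
`b = false` for an `η`-factor (contributing `−ω_i`). -/
def Omega {n k : ℕ} (ω : Fin n → ℝ) (j : Fin k → Fin n × Bool) : ℝ :=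
  ∑ i, (if (j i).2 then ω (j i).1 else -ω (j i).1)

/-- The monomial obtained by exchanging all `ξ` and `η` factors. -/
def swapMono {n k : ℕ} (j : Fin k → Fin n × Bool) : Fin k → Fin n × Bool :=
  fun i => ((j i).1, !(j i).2)

/-- Homological equation in finite dimension, at the level of coefficients of
homogeneous polynomials of degree `k`: given real `Q` (coefficients `a` with
`conj a_{jl} = a_{lj}`), there are real `χ` (coefficients `b`) and `Z`
(coefficients `c`) with `{H₀,χ} + Q = Z` (i.e. `−iΩ(j) b_j + a_j = c_j`) and
`{Z,H₀} = 0` (i.e. `c_j = 0` whenever `Ω(j) ≠ 0`). -/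
lemma Omega_swap {n k : ℕ} (ω : Fin n → ℝ) (j : Fin k → Fin n × Bool) :
    Omega ω (swapMono j) = -Omega ω j := by
  simp only [Omega, swapMono, ← Finset.sum_neg_distrib]
  apply Finset.sum_congr rfl
  intro i _
  by_cases h : (j i).2 <;> simp [h]

theorem stmt_14 (n k : ℕ) (ω : Fin n → ℝ)
    (a : (Fin k → Fin n × Bool) → ℂ)
    (ha : ∀ j, (starRingEnd ℂ) (a j) = a (swapMono j)) :
    ∃ b c : (Fin k → Fin n × Bool) → ℂ,
      (∀ j, (starRingEnd ℂ) (b j) = b (swapMono j)) ∧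
      (∀ j, (starRingEnd ℂ) (c j) = c (swapMono j)) ∧
      (∀ j, -Complex.I * (Omega ω j : ℂ) * b j + a j = c j) ∧
      (∀ j, Omega ω j ≠ 0 → c j = 0) := by
  refine ⟨fun j => if Omega ω j = 0 then 0 else a j / (Complex.I * (Omega ω j : ℂ)),
    fun j => if Omega ω j = 0 then a j else 0, ?_, ?_, ?_, ?_⟩
  · intro j
    by_cases h : Omega ω j = 0
    · simp [h, Omega_swap]
    · have h' : Omega ω (swapMono j) ≠ 0 := by simp [Omega_swap, h]
      simp only [if_neg h, if_neg h']
      rw [map_div₀, ha, map_mul, Complex.conj_I, Complex.conj_ofReal, Omega_swap]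
      push_cast
      ring_nf
  · intro j
    by_cases h : Omega ω j = 0
    · have h' : Omega ω (swapMono j) = 0 := by simp [Omega_swap, h]
      simp [h, h', ha]
    · have h' : Omega ω (swapMono j) ≠ 0 := by simp [Omega_swap, h]
      simp [h, h']
  · intro j
    by_cases h : Omega ω j = 0
    · simp [h]
    · have hI : (Complex.I * (Omega ω j : ℂ)) ≠ 0 := by
        simp [Complex.I_ne_zero, Complex.ofReal_ne_zero, h]
      simp only [if_neg h]
      field_simp [h]
      ring
  · intro j h
    simp [h]
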